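/- In a finite projective rectangle of order (m,n), every maximal subplane (projective plane incidence substructure) has order m, hence contains m(m+1) ordinary points and m^2 ordinary lines. -/

import Mathlib

open scoped Classical

/-- A projective rectangle: an incidence structure satisfying axioms (A1)–(A6). -/
structure ProjRect (P L : Type*) where
  incid : P → L → Prop
  /-- (A4) the special point -/
  D : P
  /-- (A1) every two distinct points are incident with exactly one line -/
  A1 : ∀ p q : P, p ≠ q → ∃! l : L, incid p l ∧ incid q l
  /-- (A2) there exist four points with no three collinear -/
  A2 : ∃ p1 p2 p3 p4 : P, p1 ≠ p2 ∧ p1 ≠ p3 ∧ p1 ≠ p4 ∧ p2 ≠ p3 ∧ p2 ≠ p4 ∧ p3 ≠ p4 ∧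
    ∀ l : L, ¬(incid p1 l ∧ incid p2 l ∧ incid p3 l) ∧ ¬(incid p1 l ∧ incid p2 l ∧ incid p4 l) ∧
      ¬(incid p1 l ∧ incid p3 l ∧ incid p4 l) ∧ ¬(incid p2 l ∧ incid p3 l ∧ incid p4 l)
  /-- (A3) every line has at least three points -/
  A3 : ∀ l : L, ∃ p1 p2 p3 : P, p1 ≠ p2 ∧ p1 ≠ p3 ∧ p2 ≠ p3 ∧
    incid p1 l ∧ incid p2 l ∧ incid p3 l
  /-- (A5) each special line intersects every other line in exactly one point -/
  A5 : ∀ s l : L, incid D s → l ≠ s → ∃! p : P, incid p s ∧ incid p l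
  /-- (A6) Pasch-type axiom -/
  A6 : ∀ l1 l2 g h : L, ¬incid D l1 → ¬incid D l2 → (∃ p : P, incid p l1 ∧ incid p l2) →
    (∃ p1 p2 p3 p4 : P, p1 ≠ p2 ∧ p1 ≠ p3 ∧ p1 ≠ p4 ∧ p2 ≠ p3 ∧ p2 ≠ p4 ∧ p3 ≠ p4 ∧
      incid p1 g ∧ incid p1 l1 ∧ incid p2 g ∧ incid p2 l2 ∧
      incid p3 h ∧ incid p3 l1 ∧ incid p4 h ∧ incid p4 l2) →
    ∃ p : P, incid p g ∧ incid p h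

namespace ProjRect

variable {P L : Type*} (R : ProjRect P L)

/-- A line is special if it is incident with the special point `D`. -/
def SpecialLine (l : L) : Prop := R.incid R.D l

/-- A line is ordinary if it is not incident with `D`. -/
def OrdinaryLine (l : L) : Prop := ¬ R.incid R.D l

/-- A point is ordinary if it is not `D`. -/
def OrdinaryPoint (p : P) : Prop := p ≠ R.D

/-- The set of points of a line. -/
def points (l : L) : Set P := {p | R.incid p l}

/-- `R` has order `(m, n)`: there are `m+1` special lines, each with `n+1` points. -/
def HasOrder (m n : ℕ) : Prop :=
  {l : L | R.SpecialLine l}.ncard = m + 1 ∧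
  ∀ l : L, R.SpecialLine l → (R.points l).ncard = n + 1

/-- Nontrivial: there exist two disjoint ordinary lines (i.e. `R` is not a projective plane). -/
def Nontrivial : Prop :=
  ∃ l1 l2 : L, R.OrdinaryLine l1 ∧ R.OrdinaryLine l2 ∧ ∀ p : P, ¬(R.incid p l1 ∧ R.incid p l2)

/-- An incidence substructure `(Ps, Ls)` that is a projective plane. -/
def IsSubplane (Ps : Set P) (Ls : Set L) : Prop :=
  (∀ p ∈ Ps, ∀ q ∈ Ps, p ≠ q → ∃! l : L, l ∈ Ls ∧ R.incid p l ∧ R.incid q l) ∧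
  (∀ l ∈ Ls, ∀ l' ∈ Ls, l ≠ l' → ∃! p : P, p ∈ Ps ∧ R.incid p l ∧ R.incid p l') ∧
  (∀ l ∈ Ls, ∀ p : P, R.incid p l → p ∈ Ps) ∧
  (∃ p1 ∈ Ps, ∃ p2 ∈ Ps, ∃ p3 ∈ Ps, ∃ p4 ∈ Ps,
    p1 ≠ p2 ∧ p1 ≠ p3 ∧ p1 ≠ p4 ∧ p2 ≠ p3 ∧ p2 ≠ p4 ∧ p3 ≠ p4 ∧
    ∀ l ∈ Ls, ¬(R.incid p1 l ∧ R.incid p2 l ∧ R.incid p3 l) ∧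
      ¬(R.incid p1 l ∧ R.incid p2 l ∧ R.incid p4 l) ∧
      ¬(R.incid p1 l ∧ R.incid p3 l ∧ R.incid p4 l) ∧
      ¬(R.incid p2 l ∧ R.incid p3 l ∧ R.incid p4 l))

/-- A plane: a maximal subplane. -/
def IsPlane (Ps : Set P) (Ls : Set L) : Prop :=
  R.IsSubplane Ps Ls ∧
  ∀ Ps' Ls', R.IsSubplane Ps' Ls' → Ps ⊆ Ps' → Ls ⊆ Ls' → Ps = Ps' ∧ Ls = Ls'

/-- The graph of lines: vertices are the ordinary lines, adjacent iff they intersect. -/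
def lineGraph : SimpleGraph {l : L // R.OrdinaryLine l} where
  Adj l1 l2 := l1 ≠ l2 ∧ ∃ p : P, R.incid p l1.1 ∧ R.incid p l2.1
  symm := by
    constructor
    rintro a b ⟨hne, p, h1, h2⟩
    exact ⟨hne.symm, p, h2, h1⟩
  loopless := by
    constructor
    rintro a ⟨hne, -⟩
    exact hne rfl

end ProjRect

section AuxLemmas

variable {P L : Type*}

/-- Two distinct points lie on at most one line. -/
theorem ProjRect.line_eq_of_two_points (R : ProjRect P L) {p q : P} {l l' : L} (hpq : p ≠ q)
    (h1 : R.incid p l) (h2 : R.incid q l) (h3 : R.incid p l') (h4 : R.incid q l') : l = l' := by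
  obtain ⟨u, -, hu⟩ := R.A1 p q hpq
  rw [hu l ⟨h1, h2⟩, hu l' ⟨h3, h4⟩]

/-- Every ordinary line of a projective rectangle of order `(m, n)` has exactly `m + 1` points. -/
theorem ProjRect.ordinary_line_card {m n : ℕ} (R : ProjRect P L) (h : R.HasOrder m n) {l : L}
    (hl : R.OrdinaryLine l) : (R.points l).ncard = m + 1 := by
  classical
  have key : ∀ s : L, R.SpecialLine s → l ≠ s := by
    rintro s hs rfl; exact hl hs
  set g : L → P := fun s =>
    if hs : R.SpecialLine s then Classical.choose (R.A5 s l hs (key s hs)) else R.D with hg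
  have hgs : ∀ s (hs : R.SpecialLine s),
      (R.incid (g s) s ∧ R.incid (g s) l) ∧
        ∀ y, R.incid y s ∧ R.incid y l → y = g s := by
    intro s hs
    have hval : g s = Classical.choose (R.A5 s l hs (key s hs)) := dif_pos hs
    rw [hval]
    exact Classical.choose_spec (R.A5 s l hs (key s hs))
  have hbij : Set.BijOn g {s | R.SpecialLine s} (R.points l) := by
    refine ⟨fun s hs => ((hgs s hs).1).2, ?_, ?_⟩
    · intro s hs s' hs' heq
      have h1 := (hgs s hs).1
      have h2 := (hgs s' hs').1
      have hne : g s ≠ R.D := by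
        intro he
        exact hl (he ▸ h1.2)
      refine R.line_eq_of_two_points hne h1.1 hs ?_ hs'
      rw [heq]; exact h2.1
    · intro p hp
      have hp' : R.incid p l := hp
      have hpD : p ≠ R.D := by
        intro he; exact hl (he ▸ hp')
      obtain ⟨s, ⟨hps, hDs⟩, -⟩ := R.A1 p R.D hpD
      have hs : R.SpecialLine s := hDs
      exact ⟨s, hs, ((hgs s hs).2 p ⟨hps, hp'⟩).symm⟩
  rw [← hbij.image_eq, Set.ncard_image_of_injOn hbij.injOn]
  exact h.1

/-- Any line of the rectangle through two distinct points of a subplane belongs to the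
subplane. -/
theorem ProjRect.mem_of_subplane (R : ProjRect P L) {Ps : Set P} {Ls : Set L}
    (hsub : R.IsSubplane Ps Ls) {p q : P} {l : L} (hp : p ∈ Ps) (hq : q ∈ Ps) (hpq : p ≠ q)
    (h1 : R.incid p l) (h2 : R.incid q l) : l ∈ Ls := by
  obtain ⟨l', ⟨hl', h1', h2'⟩, -⟩ := hsub.1 p hp q hq hpq
  rwa [R.line_eq_of_two_points hpq h1 h2 h1' h2']

end AuxLemmas

/-- In a finite projective rectangle of order (m,n), every maximal subplane has
order m, hence m(m+1) ordinary points and m^2 ordinary lines. -/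
theorem stmt6 {P L : Type*} [Fintype P] [Fintype L] (R : ProjRect P L) (m n : ℕ)
    (h : R.HasOrder m n) (Ps : Set P) (Ls : Set L) (hpl : R.IsPlane Ps Ls) :
    (∀ l ∈ Ls, {p ∈ Ps | R.incid p l}.ncard = m + 1) ∧
    {p ∈ Ps | R.OrdinaryPoint p}.ncard = m * (m + 1) ∧
    {l ∈ Ls | R.OrdinaryLine l}.ncard = m ^ 2 := by
  classical
  obtain ⟨hsub, -⟩ := hpl
  obtain ⟨hax1, hax2, hfull, a, ha, b, hb, c, hc, d, hd, hab, hac, had, hbc, hbd, hcd, hgen⟩ :=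
    id hsub
  -- the six lines determined by the quadrilateral
  obtain ⟨lab, ⟨labLs, haab, hbab⟩, -⟩ := hax1 a ha b hb hab
  obtain ⟨lac, ⟨lacLs, haac, hcac⟩, -⟩ := hax1 a ha c hc hac
  obtain ⟨lbc, ⟨lbcLs, hblbc, hclbc⟩, -⟩ := hax1 b hb c hc hbc
  obtain ⟨lcd, ⟨lcdLs, hclcd, hdlcd⟩, -⟩ := hax1 c hc d hd hcd
  -- the subplane as a `Configuration`
  letI : Membership (↥Ps) (↥Ls) := ⟨fun l p => R.incid p.1 l.1⟩
  haveI : Fintype ↥Ps := (Set.toFinite Ps).fintype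
  haveI : Fintype ↥Ls := (Set.toFinite Ls).fintype
  letI hPP : Configuration.ProjectivePlane (↥Ps) (↥Ls) := by
    refine
      { mkPoint := fun {l₁ l₂} hne =>
          ⟨Classical.choose (hax2 l₁.1 l₁.2 l₂.1 l₂.2 fun he => hne (Subtype.ext he)),
            ((Classical.choose_spec
              (hax2 l₁.1 l₁.2 l₂.1 l₂.2 fun he => hne (Subtype.ext he))).1).1⟩
        mkPoint_ax := fun {l₁ l₂} hne =>
          ⟨((Classical.choose_spec
              (hax2 l₁.1 l₁.2 l₂.1 l₂.2 fun he => hne (Subtype.ext he))).1).2.1,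
            ((Classical.choose_spec
              (hax2 l₁.1 l₁.2 l₂.1 l₂.2 fun he => hne (Subtype.ext he))).1).2.2⟩
        mkLine := fun {p₁ p₂} hne =>
          ⟨Classical.choose (hax1 p₁.1 p₁.2 p₂.1 p₂.2 fun he => hne (Subtype.ext he)),
            ((Classical.choose_spec
              (hax1 p₁.1 p₁.2 p₂.1 p₂.2 fun he => hne (Subtype.ext he))).1).1⟩
        mkLine_ax := fun {p₁ p₂} hne =>
          ⟨((Classical.choose_spec
              (hax1 p₁.1 p₁.2 p₂.1 p₂.2 fun he => hne (Subtype.ext he))).1).2.1,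
            ((Classical.choose_spec
              (hax1 p₁.1 p₁.2 p₂.1 p₂.2 fun he => hne (Subtype.ext he))).1).2.2⟩
        exists_point := ?_
        exists_line := ?_
        eq_or_eq := ?_
        exists_config := ?_ }
    · -- exists_point
      intro l
      by_cases hal : R.incid a l.1
      · by_cases hbl : R.incid b l.1
        · exact ⟨⟨c, hc⟩, fun hcl => (hgen l.1 l.2).1 ⟨hal, hbl, hcl⟩⟩
        · exact ⟨⟨b, hb⟩, hbl⟩
      · exact ⟨⟨a, ha⟩, hal⟩
    · -- exists_line
      intro p
      by_cases h1 : R.incid p.1 lab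
      · by_cases h2 : R.incid p.1 lac
        · have hpa : p.1 = a := by
            by_contra hne
            have heq : lab = lac := R.line_eq_of_two_points hne h1 haab h2 haac
            refine (hgen lab labLs).1 ⟨haab, hbab, ?_⟩
            rw [heq]; exact hcac
          refine ⟨⟨lbc, lbcLs⟩, fun hplbc => ?_⟩
          refine (hgen lbc lbcLs).1 ⟨?_, hblbc, hclbc⟩
          rw [← hpa]; exact hplbc
        · exact ⟨⟨lac, lacLs⟩, h2⟩
      · exact ⟨⟨lab, labLs⟩, h1⟩
    · -- eq_or_eq
      intro p₁ p₂ l₁ l₂ h1 h2 h3 h4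
      by_cases hp : p₁ = p₂
      · exact Or.inl hp
      · exact Or.inr (Subtype.ext
          (R.line_eq_of_two_points (fun he => hp (Subtype.ext he)) h1 h2 h3 h4))
    · -- exists_config
      refine ⟨⟨d, hd⟩, ⟨a, ha⟩, ⟨b, hb⟩, ⟨lcd, lcdLs⟩, ⟨lab, labLs⟩, ⟨lac, lacLs⟩,
        ?_, ?_, ?_, haab, haac, ?_, hbab, ?_⟩
      · exact fun hx => (hgen lab labLs).2.1 ⟨haab, hbab, hx⟩
      · exact fun hx => (hgen lac lacLs).2.2.1 ⟨haac, hcac, hx⟩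
      · exact fun hx => (hgen lcd lcdLs).2.2.1 ⟨hx, hclcd, hdlcd⟩
      · exact fun hx => (hgen lcd lcdLs).2.2.2 ⟨hx, hclcd, hdlcd⟩
      · exact fun hx => (hgen lac lacLs).1 ⟨haac, hx, hcac⟩
  set q := Configuration.ProjectivePlane.order (↥Ps) (↥Ls) with hqdef
  -- the key counting bridge
  have hbridge : ∀ l (hl : l ∈ Ls), {p ∈ Ps | R.incid p l}.ncard = q + 1 := by
    intro l hl
    have hpc := Configuration.ProjectivePlane.pointCount_eq (↥Ps) (⟨l, hl⟩ : ↥Ls)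
    rw [Configuration.pointCount] at hpc
    rw [← Nat.card_coe_set_eq, ← hpc]
    exact Nat.card_congr
      ((Equiv.subtypeSubtypeEquivSubtypeInter (· ∈ Ps) (fun p => R.incid p l)).symm)
  -- an ordinary line of the subplane
  obtain ⟨l0, hl0Ls, hl0ord⟩ : ∃ l0 ∈ Ls, R.OrdinaryLine l0 := by
    by_cases h1 : R.incid R.D lab
    · by_cases h2 : R.incid R.D lac
      · have haD : a = R.D := by
          by_contra hne
          have heq : lab = lac := R.line_eq_of_two_points hne haab h1 haac h2
          refine (hgen lab labLs).1 ⟨haab, hbab, ?_⟩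
          rw [heq]; exact hcac
        refine ⟨lbc, lbcLs, fun hD => ?_⟩
        refine (hgen lbc lbcLs).1 ⟨?_, hblbc, hclbc⟩
        rw [haD]; exact hD
      · exact ⟨lac, lacLs, h2⟩
    · exact ⟨lab, labLs, h1⟩
  -- the order of the subplane is m
  have hqm : q = m := by
    have h1 := hbridge l0 hl0Ls
    have h2 : {p ∈ Ps | R.incid p l0} = R.points l0 := by
      ext p
      exact ⟨fun hp => hp.2, fun hp => ⟨hfull l0 hl0Ls p hp, hp⟩⟩
    rw [h2, R.ordinary_line_card h hl0ord] at h1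
    omega
  have hm1 : 1 < m := by
    rw [← hqm]
    exact Configuration.ProjectivePlane.one_lt_order (↥Ps) (↥Ls)
  have hPs_card : Ps.ncard = m ^ 2 + m + 1 := by
    have hc := Configuration.ProjectivePlane.card_points (↥Ps) (↥Ls)
    rw [← Nat.card_coe_set_eq, Nat.card_eq_fintype_card, hc, ← hqdef, hqm]
  have hLs_card : Ls.ncard = m ^ 2 + m + 1 := by
    have hc := Configuration.ProjectivePlane.card_lines (↥Ps) (↥Ls)
    rw [← Nat.card_coe_set_eq, Nat.card_eq_fintype_card, hc, ← hqdef, hqm]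
  -- the special point belongs to the subplane
  have hDPs : R.D ∈ Ps := by
    by_contra hD
    set φ : P → L := fun p =>
      if hp : p ≠ R.D then Classical.choose (R.A1 p R.D hp) else lab with hφ
    have hφspec : ∀ p ∈ Ps, R.incid p (φ p) ∧ R.incid R.D (φ p) := by
      intro p hp
      have hne : p ≠ R.D := fun he => hD (he ▸ hp)
      have hval : φ p = Classical.choose (R.A1 p R.D hne) := dif_pos hne
      rw [hval]
      exact (Classical.choose_spec (R.A1 p R.D hne)).1
    have hinj : Set.InjOn φ Ps := by
      intro p hp p' hp' heq
      by_contra hne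
      have h1 := hφspec p hp
      have h2 := hφspec p' hp'
      rw [heq] at h1
      have hmem : φ p' ∈ Ls := R.mem_of_subplane hsub hp hp' hne h1.1 h2.1
      exact hD (hfull _ hmem R.D h2.2)
    have hsub2 : φ '' Ps ⊆ {s | R.SpecialLine s} := by
      rintro s ⟨p, hp, rfl⟩
      exact (hφspec p hp).2
    have hle := Set.ncard_le_ncard hsub2 (Set.toFinite _)
    rw [Set.ncard_image_of_injOn hinj, hPs_card, h.1] at hle
    nlinarith
  -- count of special lines of the subplane
  have hT : {l ∈ Ls | R.SpecialLine l}.ncard = m + 1 := by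
    have hlc := Configuration.ProjectivePlane.lineCount_eq (↥Ls) (⟨R.D, hDPs⟩ : ↥Ps)
    rw [Configuration.lineCount] at hlc
    rw [← Nat.card_coe_set_eq, ← hqm, ← hlc]
    exact Nat.card_congr
      ((Equiv.subtypeSubtypeEquivSubtypeInter (· ∈ Ls) (fun l => R.incid R.D l)).symm)
  refine ⟨?_, ?_, ?_⟩
  · intro l hl
    rw [hbridge l hl, hqm]
  · have hOP : {p ∈ Ps | R.OrdinaryPoint p} = Ps \ {R.D} := by
      ext p
      simp [ProjRect.OrdinaryPoint, Set.mem_diff]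
    rw [hOP, Set.ncard_diff_singleton_of_mem hDPs, hPs_card]
    ring_nf
    omega
  · have hOL : {l ∈ Ls | R.OrdinaryLine l} = Ls \ {l ∈ Ls | R.SpecialLine l} := by
      ext l
      simp only [Set.mem_setOf_eq, Set.mem_diff, ProjRect.OrdinaryLine]
      tauto
    rw [hOL, Set.ncard_diff (Set.sep_subset _ _) (Set.toFinite _), hT, hLs_card]
    have : m ^ 2 + m + 1 = m ^ 2 + (m + 1) := by ring
    rw [this, Nat.add_sub_cancel]
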